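/- The clairvoyant worst-case cost is monotonically non-decreasing in the planning horizon: the maximum eigenvalue of 𝐂_T is less than or equal to the maximum eigenvalue of 𝐂_{T+1}. (Corollary 1, first part.) -/

import Mathlib

open Matrix

noncomputable section

/-- Index type for stacked state / disturbance trajectories over horizon `T`:
block index in `Fin (T+1)`, coordinate in `Fin n`. -/
abbrev SIdx (n T : ℕ) := Fin (T + 1) × Fin n

/-- Index type for stacked input trajectories over horizon `T`. -/
abbrev UIdx (m T : ℕ) := Fin T × Fin m

/-- The block-downshift operator `𝐙`. -/
def Zshift (n T : ℕ) : Matrix (SIdx n T) (SIdx n T) ℝ :=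
  Matrix.of fun p q => if (p.1 : ℕ) = (q.1 : ℕ) + 1 ∧ p.2 = q.2 then (1 : ℝ) else 0

/-- `𝐀 = I_{T+1} ⊗ A`. -/
def bigA (n T : ℕ) (A : Matrix (Fin n) (Fin n) ℝ) : Matrix (SIdx n T) (SIdx n T) ℝ :=
  Matrix.of fun p q => if p.1 = q.1 then A p.2 q.2 else 0

/-- `𝐁 = col(I_T ⊗ B, 0)`. -/
def bigB (n m T : ℕ) (B : Matrix (Fin n) (Fin m) ℝ) : Matrix (SIdx n T) (UIdx m T) ℝ :=
  Matrix.of fun p q => if (p.1 : ℕ) = (q.1 : ℕ) then B p.2 q.2 else 0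

/-- `𝐐 = blkdiag(I_T ⊗ Q, 0)`. -/
def bigQ (n T : ℕ) (Q : Matrix (Fin n) (Fin n) ℝ) : Matrix (SIdx n T) (SIdx n T) ℝ :=
  Matrix.of fun p q => if p.1 = q.1 ∧ (p.1 : ℕ) < T then Q p.2 q.2 else 0

/-- `𝐑 = I_T ⊗ R`. -/
def bigR (m T : ℕ) (R : Matrix (Fin m) (Fin m) ℝ) : Matrix (UIdx m T) (UIdx m T) ℝ :=
  Matrix.of fun p q => if p.1 = q.1 then R p.2 q.2 else 0

/-- `𝐅 = (I − 𝐙𝐀)⁻¹𝐙𝐁`. -/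
def bigF (n m T : ℕ) (A : Matrix (Fin n) (Fin n) ℝ) (B : Matrix (Fin n) (Fin m) ℝ) :
    Matrix (SIdx n T) (UIdx m T) ℝ :=
  (1 - Zshift n T * bigA n T A)⁻¹ * (Zshift n T * bigB n m T B)

/-- `𝐆 = (I − 𝐙𝐀)⁻¹`. -/
def bigG (n T : ℕ) (A : Matrix (Fin n) (Fin n) ℝ) : Matrix (SIdx n T) (SIdx n T) ℝ :=
  (1 - Zshift n T * bigA n T A)⁻¹

/-- The control cost `J_T(u, δ) = xᵀ𝐐x + uᵀ𝐑u` with `x = 𝐅u + 𝐆δ`. -/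
def costJ (n m T : ℕ) (A : Matrix (Fin n) (Fin n) ℝ) (B : Matrix (Fin n) (Fin m) ℝ)
    (Q : Matrix (Fin n) (Fin n) ℝ) (R : Matrix (Fin m) (Fin m) ℝ)
    (u : UIdx m T → ℝ) (δ : SIdx n T → ℝ) : ℝ :=
  let x := bigF n m T A B *ᵥ u + bigG n T A *ᵥ δ
  x ⬝ᵥ (bigQ n T Q *ᵥ x) + u ⬝ᵥ (bigR m T R *ᵥ u)

/-- `𝐏 = 𝐑 + 𝐅ᵀ𝐐𝐅`. -/
def bigP (n m T : ℕ) (A : Matrix (Fin n) (Fin n) ℝ) (B : Matrix (Fin n) (Fin m) ℝ)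
    (Q : Matrix (Fin n) (Fin n) ℝ) (R : Matrix (Fin m) (Fin m) ℝ) :
    Matrix (UIdx m T) (UIdx m T) ℝ :=
  bigR m T R + (bigF n m T A B)ᵀ * bigQ n T Q * bigF n m T A B

/-- The clairvoyant cost matrix `𝐂_T = 𝐆ᵀ𝐐(I + 𝐅𝐑⁻¹𝐅ᵀ𝐐)⁻¹𝐆`. -/
def Cmat (n m T : ℕ) (A : Matrix (Fin n) (Fin n) ℝ) (B : Matrix (Fin n) (Fin m) ℝ)
    (Q : Matrix (Fin n) (Fin n) ℝ) (R : Matrix (Fin m) (Fin m) ℝ) :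
    Matrix (SIdx n T) (SIdx n T) ℝ :=
  (bigG n T A)ᵀ * bigQ n T Q *
    (1 + bigF n m T A B * (bigR m T R)⁻¹ * (bigF n m T A B)ᵀ * bigQ n T Q)⁻¹ * bigG n T A

/-- Assemble `δ = col(x₀, w₀, …, w_{T−1})`. -/
def assemble (n T : ℕ) (x0 : Fin n → ℝ) (w : Fin T × Fin n → ℝ) : SIdx n T → ℝ :=
  fun p => if h : (p.1 : ℕ) = 0 then x0 p.2
    else w (⟨(p.1 : ℕ) - 1, by have := p.1.isLt; omega⟩, p.2)

variable {n m : ℕ} (A : Matrix (Fin n) (Fin n) ℝ) (B : Matrix (Fin n) (Fin m) ℝ)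

lemma ZA_apply (L : ℕ) (p q : SIdx n L) :
    (Zshift n L * bigA n L A) p q = if (p.1:ℕ) = (q.1:ℕ) + 1 then A p.2 q.2 else 0 := by
  classical
  simp only [Matrix.mul_apply, Zshift, bigA, Matrix.of_apply]
  rw [Finset.sum_eq_single (q.1, p.2)]
  · simp
  · rintro ⟨s, j⟩ - hb
    by_cases h1 : (p.1:ℕ) = (s:ℕ) + 1 ∧ p.2 = j
    · have : s ≠ q.1 ∨ j ≠ p.2 := by
        by_contra hc
        push_neg at hc
        exact hb (by simp [hc.1, hc.2])
      rcases this with h | h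
      · simp [Prod.ext_iff] at hb ⊢
        intro hs; exact fun hj => absurd hs h
      · exact absurd h1.2.symm h
    · simp [h1]
  · intro h; exact absurd (Finset.mem_univ _) h

lemma ZB_apply (L : ℕ) (p : SIdx n L) (r : UIdx m L) :
    (Zshift n L * bigB n m L B) p r = if (p.1:ℕ) = (r.1:ℕ) + 1 then B p.2 r.2 else 0 := by
  classical
  simp only [Matrix.mul_apply, Zshift, bigB, Matrix.of_apply]
  by_cases hpr : (p.1:ℕ) = (r.1:ℕ) + 1
  · have hlt : (r.1:ℕ) < L + 1 := by omega
    rw [Finset.sum_eq_single ((⟨(r.1:ℕ), hlt⟩ : Fin (L+1)), p.2)]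
    · simp [hpr]
    · rintro ⟨s, j⟩ - hb
      by_cases h1 : (p.1:ℕ) = (s:ℕ) + 1 ∧ p.2 = j
      · have hs : (s:ℕ) = (r.1:ℕ) := by omega
        exfalso; apply hb
        simp [Prod.ext_iff, ← h1.2, Fin.ext_iff, hs]
      · simp [h1]
    · intro h; exact absurd (Finset.mem_univ _) h
  · rw [if_neg hpr]
    apply Finset.sum_eq_zero
    rintro ⟨s, j⟩ -
    by_cases h1 : (p.1:ℕ) = (s:ℕ) + 1 ∧ p.2 = j
    · have : ¬ ((s:ℕ) = (r.1:ℕ)) := by omega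
      simp [h1, this]
    · simp [h1]

lemma ZA_pow_apply (L k : ℕ) (p q : SIdx n L) :
    ((Zshift n L * bigA n L A) ^ k) p q
      = if (p.1:ℕ) = (q.1:ℕ) + k then (A ^ k) p.2 q.2 else 0 := by
  classical
  induction k generalizing p q with
  | zero => simp [Matrix.one_apply, Prod.ext_iff, Fin.ext_iff, and_comm, ite_and]
  | succ k ih =>
    rw [pow_succ', Matrix.mul_apply, Fintype.sum_prod_type]
    by_cases hpq : (p.1:ℕ) = (q.1:ℕ) + (k+1)
    · have hlt : (q.1:ℕ) + k < L + 1 := by have := p.1.isLt; omega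
      rw [Finset.sum_eq_single (⟨(q.1:ℕ) + k, hlt⟩ : Fin (L+1))]
      · rw [if_pos hpq, pow_succ', Matrix.mul_apply]
        apply Finset.sum_congr rfl
        intro j _
        rw [ZA_apply, ih]
        rw [if_pos (by simpa [Nat.add_assoc] using hpq), if_pos (by simp)]
      · intro s _ hb
        apply Finset.sum_eq_zero
        intro j _
        rw [ZA_apply, ih]
        by_cases h1 : (p.1:ℕ) = (s:ℕ) + 1
        · have h2 : ¬ ((s:ℕ) = (q.1:ℕ) + k) := by
            intro hc; exact hb (by simpa [Fin.ext_iff] using hc)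
          simp [h2]
        · rw [if_neg h1, zero_mul]
      · intro h; exact absurd (Finset.mem_univ _) h
    · rw [if_neg hpq]
      apply Finset.sum_eq_zero
      intro s _
      apply Finset.sum_eq_zero
      intro j _
      rw [ZA_apply, ih]
      by_cases h1 : (p.1:ℕ) = (s:ℕ) + 1
      · have h2 : ¬ ((s:ℕ) = (q.1:ℕ) + k) := by omega
        simp [h2]
      · rw [if_neg h1, zero_mul]

lemma ZA_pow_eq_zero (L : ℕ) : (Zshift n L * bigA n L A) ^ (L+1) = 0 := by
  ext p q
  rw [ZA_pow_apply]
  have : ¬ ((p.1:ℕ) = (q.1:ℕ) + (L+1)) := by have := p.1.isLt; omega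
  simp [this]

lemma bigG_eq (L : ℕ) :
    bigG n L A = ∑ k ∈ Finset.range (L+1), (Zshift n L * bigA n L A) ^ k := by
  unfold bigG
  exact Matrix.inv_eq_right_inv
    (by rw [mul_neg_geom_sum, ZA_pow_eq_zero, sub_zero])

lemma oneSubZA_mul_bigG (L : ℕ) :
    (1 - Zshift n L * bigA n L A) * bigG n L A = 1 := by
  rw [bigG_eq, mul_neg_geom_sum, ZA_pow_eq_zero, sub_zero]

lemma bigG_apply (L : ℕ) (p q : SIdx n L) :
    bigG n L A p q
      = if (q.1:ℕ) ≤ (p.1:ℕ) then (A ^ ((p.1:ℕ) - (q.1:ℕ))) p.2 q.2 else 0 := by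
  classical
  rw [bigG_eq]
  rw [Matrix.sum_apply]
  by_cases h : (q.1:ℕ) ≤ (p.1:ℕ)
  · rw [if_pos h]
    rw [Finset.sum_eq_single_of_mem ((p.1:ℕ) - (q.1:ℕ))
        (Finset.mem_range.2 (by have := p.1.isLt; omega))]
    · rw [ZA_pow_apply, if_pos (by omega)]
    · intro k _ hk
      rw [ZA_pow_apply, if_neg (by omega)]
  · rw [if_neg h]
    apply Finset.sum_eq_zero
    intro k _
    rw [ZA_pow_apply, if_neg (by omega)]

lemma bigF_apply (L : ℕ) (p : SIdx n L) (r : UIdx m L) :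
    bigF n m L A B p r
      = if (r.1:ℕ) + 1 ≤ (p.1:ℕ)
          then (A ^ ((p.1:ℕ) - (r.1:ℕ) - 1) * B) p.2 r.2 else 0 := by
  classical
  have : bigF n m L A B = bigG n L A * (Zshift n L * bigB n m L B) := rfl
  rw [this, Matrix.mul_apply, Fintype.sum_prod_type]
  have hlt : (r.1:ℕ) + 1 < L + 1 := by have := r.1.isLt; omega
  rw [Finset.sum_eq_single (⟨(r.1:ℕ) + 1, hlt⟩ : Fin (L+1))]
  · by_cases h : (r.1:ℕ) + 1 ≤ (p.1:ℕ)
    · rw [if_pos h, Matrix.mul_apply]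
      apply Finset.sum_congr rfl
      intro j _
      rw [bigG_apply, ZB_apply, if_pos (by simpa using h), if_pos (by simp)]
      simp [Nat.sub_sub]
    · rw [if_neg h]
      apply Finset.sum_eq_zero
      intro j _
      rw [bigG_apply, if_neg (by simpa using h), zero_mul]
  · intro s _ hb
    apply Finset.sum_eq_zero
    intro j _
    have h2 : ¬ ((s:ℕ) = (r.1:ℕ) + 1) := by
      intro hc; exact hb (by simpa [Fin.ext_iff] using hc)
    rw [ZB_apply, if_neg (by simpa using h2), mul_zero]
  · intro h; exact absurd (Finset.mem_univ _) h

def padS (n T : ℕ) (δ : SIdx n T → ℝ) : SIdx n (T+1) → ℝ :=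
  fun p => if h : (p.1:ℕ) < T + 1 then δ (⟨p.1, h⟩, p.2) else 0

def truncU (m T : ℕ) (u : UIdx m (T+1) → ℝ) : UIdx m T → ℝ :=
  fun r => u (r.1.castSucc, r.2)

variable (Q : Matrix (Fin n) (Fin n) ℝ) (R : Matrix (Fin m) (Fin m) ℝ)

lemma bigQ_mulVec (L : ℕ) (x : SIdx n L → ℝ) (s : Fin (L+1)) (i : Fin n) :
    (bigQ n L Q *ᵥ x) (s, i)
      = if (s:ℕ) < L then (Q *ᵥ fun j => x (s, j)) i else 0 := by
  classical
  simp only [Matrix.mulVec, dotProduct, bigQ, Matrix.of_apply]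
  rw [Fintype.sum_prod_type]
  by_cases h : (s:ℕ) < L
  · rw [if_pos h, Finset.sum_eq_single s]
    · simp [h, Matrix.mulVec, dotProduct]
    · intro b _ hb
      apply Finset.sum_eq_zero
      intro j _
      rw [if_neg (by simp; intro hc; first | exact absurd hc.symm hb | exact absurd hc hb), zero_mul]
    · intro h; exact absurd (Finset.mem_univ _) h
  · rw [if_neg h]
    apply Finset.sum_eq_zero
    intro b _
    apply Finset.sum_eq_zero
    intro j _
    by_cases hb : s = b
    · rw [if_neg (by simp [← hb, h]), zero_mul]
    · rw [if_neg (by simp; intro hc; first | exact absurd hc.symm hb | exact absurd hc hb), zero_mul]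

lemma bigR_mulVec (L : ℕ) (u : UIdx m L → ℝ) (t : Fin L) (k : Fin m) :
    (bigR m L R *ᵥ u) (t, k) = (R *ᵥ fun j => u (t, j)) k := by
  classical
  simp only [Matrix.mulVec, dotProduct, bigR, Matrix.of_apply]
  rw [Fintype.sum_prod_type, Finset.sum_eq_single t]
  · simp
  · intro b _ hb
    apply Finset.sum_eq_zero
    intro j _
    rw [if_neg (by simp; intro hc; first | exact absurd hc.symm hb | exact absurd hc hb), zero_mul]
  · intro h; exact absurd (Finset.mem_univ _) h

lemma bigQ_quadform (L : ℕ) (x : SIdx n L → ℝ) :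
    x ⬝ᵥ (bigQ n L Q *ᵥ x)
      = ∑ t : Fin L, (fun i => x (t.castSucc, i)) ⬝ᵥ (Q *ᵥ fun i => x (t.castSucc, i)) := by
  classical
  rw [dotProduct, Fintype.sum_prod_type, Fin.sum_univ_castSucc]
  have hlast : ∑ i : Fin n, x (Fin.last L, i) * (bigQ n L Q *ᵥ x) (Fin.last L, i) = 0 := by
    apply Finset.sum_eq_zero
    intro i _
    rw [bigQ_mulVec, if_neg (by simp), mul_zero]
  rw [hlast, add_zero]
  apply Finset.sum_congr rfl
  intro t _
  rw [dotProduct]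
  apply Finset.sum_congr rfl
  intro i _
  rw [bigQ_mulVec, if_pos (by simp)]

lemma bigR_quadform (L : ℕ) (u : UIdx m L → ℝ) :
    u ⬝ᵥ (bigR m L R *ᵥ u)
      = ∑ t : Fin L, (fun k => u (t, k)) ⬝ᵥ (R *ᵥ fun k => u (t, k)) := by
  classical
  rw [dotProduct, Fintype.sum_prod_type]
  apply Finset.sum_congr rfl
  intro t _
  rw [dotProduct]
  apply Finset.sum_congr rfl
  intro k _
  rw [bigR_mulVec]

lemma bigG_mulVec_pad (T : ℕ) (δ : SIdx n T → ℝ) (t : Fin (T+1)) (i : Fin n) :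
    (bigG n (T+1) A *ᵥ padS n T δ) (t.castSucc, i) = (bigG n T A *ᵥ δ) (t, i) := by
  classical
  simp only [Matrix.mulVec, dotProduct]
  rw [Fintype.sum_prod_type, Fintype.sum_prod_type, Fin.sum_univ_castSucc]
  have hlast : ∑ j : Fin n,
      bigG n (T+1) A (t.castSucc, i) (Fin.last (T+1), j) * padS n T δ (Fin.last (T+1), j) = 0 := by
    apply Finset.sum_eq_zero
    intro j _
    have : padS n T δ (Fin.last (T+1), j) = 0 := by
      simp [padS]
    rw [this, mul_zero]
  rw [hlast, add_zero]
  apply Finset.sum_congr rfl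
  intro s _
  apply Finset.sum_congr rfl
  intro j _
  rw [bigG_apply, bigG_apply]
  have hp : padS n T δ (s.castSucc, j) = δ (s, j) := by
    simp [padS]; intro h; exact absurd s.isLt (by omega)
  rw [hp]
  simp

lemma bigF_mulVec_trunc (T : ℕ) (u' : UIdx m (T+1) → ℝ) (t : Fin (T+1)) (i : Fin n) :
    (bigF n m (T+1) A B *ᵥ u') (t.castSucc, i)
      = (bigF n m T A B *ᵥ truncU m T u') (t, i) := by
  classical
  simp only [Matrix.mulVec, dotProduct]
  rw [Fintype.sum_prod_type, Fintype.sum_prod_type, Fin.sum_univ_castSucc]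
  have hlast : ∑ k : Fin m,
      bigF n m (T+1) A B (t.castSucc, i) (Fin.last T, k) * u' (Fin.last T, k) = 0 := by
    apply Finset.sum_eq_zero
    intro k _
    rw [bigF_apply, if_neg (by simp; have := t.isLt; omega), zero_mul]
  rw [hlast, add_zero]
  apply Finset.sum_congr rfl
  intro r _
  apply Finset.sum_congr rfl
  intro k _
  rw [bigF_apply, bigF_apply]
  simp [truncU]

lemma star_pi {k : Type*} (v : k → ℝ) : star v = v := funext fun _ => rfl

lemma bigQ_posSemidef {L : ℕ} (hQ : Q.PosSemidef) : (bigQ n L Q).PosSemidef := by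
  refine Matrix.PosSemidef.of_dotProduct_mulVec_nonneg ?_ ?_
  · ext p q
    simp only [Matrix.conjTranspose_apply, bigQ, Matrix.of_apply, star_trivial]
    by_cases h : q.1 = p.1 ∧ (q.1:ℕ) < L
    · rw [if_pos h, if_pos ⟨h.1.symm, h.1 ▸ h.2⟩]
      have := congrFun (congrFun hQ.1 p.2) q.2
      simpa using this.symm ▸ rfl
    · rw [if_neg h, if_neg (by rintro ⟨h1, h2⟩; exact h ⟨h1.symm, h1 ▸ h2⟩)]
  · intro x
    rw [star_pi, bigQ_quadform]
    apply Finset.sum_nonneg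
    intro t _
    have := hQ.dotProduct_mulVec_nonneg (fun i => x (t.castSucc, i))
    rwa [star_pi] at this

lemma bigR_posDef {L : ℕ} (hR : R.PosDef) : (bigR m L R).PosDef := by
  refine Matrix.PosDef.of_dotProduct_mulVec_pos ?_ ?_
  · ext p q
    simp only [Matrix.conjTranspose_apply, bigR, Matrix.of_apply, star_trivial]
    by_cases h : q.1 = p.1
    · rw [if_pos h, if_pos h.symm]
      have := congrFun (congrFun hR.1 p.2) q.2
      simpa using this.symm ▸ rfl
    · rw [if_neg h, if_neg (fun h1 => h h1.symm)]
  · intro u hu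
    rw [star_pi, bigR_quadform]
    have hterm : ∀ t : Fin L, 0 ≤ (fun k => u (t, k)) ⬝ᵥ (R *ᵥ fun k => u (t, k)) := by
      intro t
      have := hR.posSemidef.dotProduct_mulVec_nonneg (fun k => u (t, k))
      rwa [star_pi] at this
    obtain ⟨⟨t0, k0⟩, hk⟩ : ∃ p, u p ≠ 0 := by
      by_contra hc; push_neg at hc; exact hu (funext hc)
    apply Finset.sum_pos' (fun t _ => hterm t)
    refine ⟨t0, Finset.mem_univ _, ?_⟩
    have hne : (fun k => u (t0, k)) ≠ 0 := by
      intro hc; exact hk (congrFun hc k0)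
    have := hR.dotProduct_mulVec_pos hne
    rwa [star_pi] at this

lemma costJ_trunc_le (hQ : Q.PosSemidef) (hR : R.PosSemidef) (T : ℕ)
    (u' : UIdx m (T+1) → ℝ) (δ : SIdx n T → ℝ) :
    costJ n m T A B Q R (truncU m T u') δ ≤ costJ n m (T+1) A B Q R u' (padS n T δ) := by
  have hx : ∀ (s : Fin (T+1)) (i : Fin n),
      (bigF n m (T+1) A B *ᵥ u' + bigG n (T+1) A *ᵥ padS n T δ) (s.castSucc, i)
        = (bigF n m T A B *ᵥ truncU m T u' + bigG n T A *ᵥ δ) (s, i) := by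
    intro s i
    simp only [Pi.add_apply]
    rw [bigF_mulVec_trunc, bigG_mulVec_pad]
  have qnn : ∀ (v : Fin n → ℝ), 0 ≤ v ⬝ᵥ (Q *ᵥ v) := by
    intro v; have := hQ.dotProduct_mulVec_nonneg v; rwa [star_pi] at this
  have rnn : ∀ (v : Fin m → ℝ), 0 ≤ v ⬝ᵥ (R *ᵥ v) := by
    intro v; have := hR.dotProduct_mulVec_nonneg v; rwa [star_pi] at this
  unfold costJ
  simp only
  rw [bigQ_quadform, bigQ_quadform, bigR_quadform, bigR_quadform,
      Fin.sum_univ_castSucc (n := T), Fin.sum_univ_castSucc (n := T)]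
  have hQsum : ∀ t : Fin T,
      (fun i => (bigF n m (T+1) A B *ᵥ u' + bigG n (T+1) A *ᵥ padS n T δ)
          ((t.castSucc).castSucc, i)) ⬝ᵥ
        (Q *ᵥ fun i => (bigF n m (T+1) A B *ᵥ u' + bigG n (T+1) A *ᵥ padS n T δ)
          ((t.castSucc).castSucc, i))
      = (fun i => (bigF n m T A B *ᵥ truncU m T u' + bigG n T A *ᵥ δ) (t.castSucc, i)) ⬝ᵥ
        (Q *ᵥ fun i => (bigF n m T A B *ᵥ truncU m T u' + bigG n T A *ᵥ δ) (t.castSucc, i)) := by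
    intro t
    have hfun : (fun i => (bigF n m (T+1) A B *ᵥ u' + bigG n (T+1) A *ᵥ padS n T δ)
        ((t.castSucc).castSucc, i))
        = fun i => (bigF n m T A B *ᵥ truncU m T u' + bigG n T A *ᵥ δ) (t.castSucc, i) :=
      funext fun i => hx t.castSucc i
    rw [hfun]
  calc (∑ t : Fin T,
        (fun i => (bigF n m T A B *ᵥ truncU m T u' + bigG n T A *ᵥ δ) (t.castSucc, i)) ⬝ᵥ
          (Q *ᵥ fun i => (bigF n m T A B *ᵥ truncU m T u' + bigG n T A *ᵥ δ) (t.castSucc, i)))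
      + ∑ t : Fin T, (fun k => truncU m T u' (t, k)) ⬝ᵥ (R *ᵥ fun k => truncU m T u' (t, k))
      ≤ (∑ t : Fin T,
          (fun i => (bigF n m (T+1) A B *ᵥ u' + bigG n (T+1) A *ᵥ padS n T δ)
            ((t.castSucc).castSucc, i)) ⬝ᵥ
          (Q *ᵥ fun i => (bigF n m (T+1) A B *ᵥ u' + bigG n (T+1) A *ᵥ padS n T δ)
            ((t.castSucc).castSucc, i))
        + (fun i => (bigF n m (T+1) A B *ᵥ u' + bigG n (T+1) A *ᵥ padS n T δ)
            ((Fin.last T).castSucc, i)) ⬝ᵥ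
          (Q *ᵥ fun i => (bigF n m (T+1) A B *ᵥ u' + bigG n (T+1) A *ᵥ padS n T δ)
            ((Fin.last T).castSucc, i)))
      + (∑ t : Fin T, (fun k => u' (t.castSucc, k)) ⬝ᵥ (R *ᵥ fun k => u' (t.castSucc, k))
        + (fun k => u' (Fin.last T, k)) ⬝ᵥ (R *ᵥ fun k => u' (Fin.last T, k))) := by
        apply add_le_add
        · apply le_add_of_le_of_nonneg _ (qnn _)
          apply le_of_eq
          apply Finset.sum_congr rfl
          intro t _
          exact (hQsum t).symm
        · apply le_add_of_le_of_nonneg _ (rnn _)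
          apply le_of_eq
          apply Finset.sum_congr rfl
          intro t _
          rfl
    _ = _ := rfl

lemma realCT {ι κ : Type*} (M : Matrix ι κ ℝ) : Mᴴ = Mᵀ := by
  ext i j; simp [Matrix.conjTranspose_apply]

lemma bigP_posDef {T : ℕ} (hQ : Q.PosSemidef) (hR : R.PosDef) :
    (bigP n m T A B Q R).PosDef := by
  unfold bigP
  apply (bigR_posDef (R := R) hR).add_posSemidef
  have := (bigQ_posSemidef (Q := Q) (L := T) hQ).conjTranspose_mul_mul_same (bigF n m T A B)
  rwa [realCT] at this

section alg

variable {T : ℕ}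

lemma bigQ_symm (hQ : Q.PosSemidef) : (bigQ n T Q)ᵀ = bigQ n T Q := by
  rw [← realCT]
  exact (bigQ_posSemidef (Q := Q) (L := T) hQ).1

lemma bigP_symm (hQ : Q.PosSemidef) (hR : R.PosDef) : (bigP n m T A B Q R)ᵀ = bigP n m T A B Q R := by
  rw [← realCT]
  exact (bigP_posDef (A := A) (B := B) (Q := Q) (R := R) (T := T) hQ hR).1

lemma bigP_det (hQ : Q.PosSemidef) (hR : R.PosDef) : IsUnit (bigP n m T A B Q R).det :=
  (bigP_posDef (A := A) (B := B) (Q := Q) (R := R) (T := T) hQ hR).det_pos.ne'.isUnit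

lemma bigR_det (hR : R.PosDef) : IsUnit (bigR m T R).det :=
  (bigR_posDef (R := R) (m := m) (L := T) hR).det_pos.ne'.isUnit

lemma woodbury (hQ : Q.PosSemidef) (hR : R.PosDef) :
    (bigQ n T Q - bigQ n T Q * bigF n m T A B * (bigP n m T A B Q R)⁻¹ *
        (bigF n m T A B)ᵀ * bigQ n T Q) *
      (1 + bigF n m T A B * (bigR m T R)⁻¹ * (bigF n m T A B)ᵀ * bigQ n T Q) = bigQ n T Q := by
  set Qb := bigQ n T Q
  set Rb := bigR m T R
  set F := bigF n m T A B
  set P := bigP n m T A B Q R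
  have hP : IsUnit P.det := bigP_det (A := A) (B := B) (Q := Q) (R := R) hQ hR
  have hRb : IsUnit Rb.det := bigR_det (R := R) (m := m) (T := T) hR
  have hFQF : Fᵀ * Qb * F = P - Rb := by
    show Fᵀ * Qb * F = (Rb + Fᵀ * Qb * F) - Rb
    abel
  have key : P⁻¹ * (Fᵀ * Qb * F) * Rb⁻¹ = Rb⁻¹ - P⁻¹ := by
    rw [hFQF, Matrix.mul_sub, Matrix.nonsing_inv_mul _ hP, Matrix.sub_mul, Matrix.one_mul,
      Matrix.mul_assoc, Matrix.mul_nonsing_inv _ hRb, Matrix.mul_one]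
  calc (Qb - Qb * F * P⁻¹ * Fᵀ * Qb) * (1 + F * Rb⁻¹ * Fᵀ * Qb)
      = Qb + Qb * F * ((Rb⁻¹ - P⁻¹) - P⁻¹ * (Fᵀ * Qb * F) * Rb⁻¹) * (Fᵀ * Qb) := by
        simp only [Matrix.sub_mul, Matrix.mul_sub, Matrix.mul_add, Matrix.add_mul,
          Matrix.mul_one, Matrix.one_mul, Matrix.mul_assoc]
        abel
    _ = Qb := by
        rw [key, sub_self]
        simp

lemma M_det (hQ : Q.PosSemidef) (hR : R.PosDef) :
    IsUnit (1 + bigF n m T A B * (bigR m T R)⁻¹ * (bigF n m T A B)ᵀ * bigQ n T Q).det := by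
  set Qb := bigQ n T Q
  set Rb := bigR m T R
  set F := bigF n m T A B
  set P := bigP n m T A B Q R with hPdef
  have hP : IsUnit P.det := bigP_det (A := A) (B := B) (Q := Q) (R := R) hQ hR
  have hRb : IsUnit Rb.det := bigR_det (R := R) (m := m) (T := T) hR
  have h1 : (1 : Matrix (SIdx n T) (SIdx n T) ℝ) + F * Rb⁻¹ * Fᵀ * Qb
      = 1 + F * (Rb⁻¹ * (Fᵀ * Qb)) := by rw [Matrix.mul_assoc, Matrix.mul_assoc]
  rw [h1, Matrix.det_one_add_mul_comm]
  have h2 : (1 : Matrix (UIdx m T) (UIdx m T) ℝ) + Rb⁻¹ * (Fᵀ * Qb) * F = Rb⁻¹ * P := by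
    rw [hPdef]
    show _ = Rb⁻¹ * (Rb + Fᵀ * Qb * F)
    rw [Matrix.mul_add, Matrix.nonsing_inv_mul _ hRb, Matrix.mul_assoc, Matrix.mul_assoc]
  rw [h2, Matrix.det_mul]
  exact (Matrix.isUnit_nonsing_inv_det Rb hRb).mul hP

lemma Cmat_eq (hQ : Q.PosSemidef) (hR : R.PosDef) :
    Cmat n m T A B Q R
      = (bigG n T A)ᵀ * bigQ n T Q * bigG n T A
        - ((bigF n m T A B)ᵀ * bigQ n T Q * bigG n T A)ᵀ * (bigP n m T A B Q R)⁻¹ *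
            ((bigF n m T A B)ᵀ * bigQ n T Q * bigG n T A) := by
  set Qb := bigQ n T Q with hQbdef
  set Rb := bigR m T R
  set F := bigF n m T A B
  set G := bigG n T A
  set P := bigP n m T A B Q R
  set M := (1 : Matrix (SIdx n T) (SIdx n T) ℝ) + F * Rb⁻¹ * Fᵀ * Qb with hMdef
  have hM : IsUnit M.det := M_det (A := A) (B := B) (Q := Q) (R := R) hQ hR
  have hQM : Qb * M⁻¹ = Qb - Qb * F * P⁻¹ * Fᵀ * Qb := by
    calc Qb * M⁻¹ = ((Qb - Qb * F * P⁻¹ * Fᵀ * Qb) * M) * M⁻¹ := by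
          rw [woodbury (A := A) (B := B) (Q := Q) (R := R) hQ hR]
      _ = Qb - Qb * F * P⁻¹ * Fᵀ * Qb := Matrix.mul_nonsing_inv_cancel_right _ _ hM
  have hCmat : Cmat n m T A B Q R = Gᵀ * (Qb * M⁻¹) * G := by
    show Gᵀ * Qb * M⁻¹ * G = _
    rw [Matrix.mul_assoc (Gᵀ) Qb M⁻¹]
  rw [hCmat, hQM]
  have hQsym : Qbᵀ = Qb := bigQ_symm (Q := Q) hQ
  rw [Matrix.transpose_mul, Matrix.transpose_mul, Matrix.transpose_transpose, hQsym]
  simp only [Matrix.sub_mul, Matrix.mul_sub, Matrix.mul_assoc]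

lemma dp_mv {ι κ : Type*} [Fintype ι] [Fintype κ] (M : Matrix ι κ ℝ) (x : ι → ℝ) (y : κ → ℝ) :
    (M *ᵥ y) ⬝ᵥ x = y ⬝ᵥ (Mᵀ *ᵥ x) := by
  rw [Matrix.mulVec_transpose, dotProduct_comm, Matrix.dotProduct_mulVec,
    dotProduct_comm]

lemma dp_swap {ι κ : Type*} [Fintype ι] [Fintype κ] (M : Matrix ι κ ℝ) (x : ι → ℝ) (y : κ → ℝ) :
    x ⬝ᵥ (M *ᵥ y) = y ⬝ᵥ (Mᵀ *ᵥ x) := by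
  rw [dotProduct_comm, dp_mv]

lemma costJ_eq (hQ : Q.PosSemidef) (hR : R.PosDef) (u : UIdx m T → ℝ) (δ : SIdx n T → ℝ) :
    costJ n m T A B Q R u δ
      = (u + ((bigP n m T A B Q R)⁻¹ * ((bigF n m T A B)ᵀ * bigQ n T Q * bigG n T A)) *ᵥ δ) ⬝ᵥ
          (bigP n m T A B Q R *ᵥ
            (u + ((bigP n m T A B Q R)⁻¹ * ((bigF n m T A B)ᵀ * bigQ n T Q * bigG n T A)) *ᵥ δ))
        + δ ⬝ᵥ (Cmat n m T A B Q R *ᵥ δ) := by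
  set Qb := bigQ n T Q
  set Rb := bigR m T R
  set F := bigF n m T A B
  set G := bigG n T A
  set P := bigP n m T A B Q R with hPdef
  set S := Fᵀ * Qb * G with hSdef
  have hP : IsUnit P.det := bigP_det (A := A) (B := B) (Q := Q) (R := R) hQ hR
  have hQsym : Qbᵀ = Qb := bigQ_symm (Q := Q) hQ
  have hPsym : Pᵀ = P := bigP_symm (A := A) (B := B) (Q := Q) (R := R) hQ hR
  -- LHS expansion
  have lhs_eq : costJ n m T A B Q R u δ
      = u ⬝ᵥ (P *ᵥ u) + 2 * (u ⬝ᵥ (S *ᵥ δ)) + δ ⬝ᵥ ((Gᵀ * Qb * G) *ᵥ δ) := by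
    show (F *ᵥ u + G *ᵥ δ) ⬝ᵥ (Qb *ᵥ (F *ᵥ u + G *ᵥ δ)) + u ⬝ᵥ (Rb *ᵥ u) = _
    rw [Matrix.mulVec_add, dotProduct_add, add_dotProduct, add_dotProduct]
    have e1 : (F *ᵥ u) ⬝ᵥ (Qb *ᵥ (F *ᵥ u)) = u ⬝ᵥ ((Fᵀ * Qb * F) *ᵥ u) := by
      rw [dp_mv, ← Matrix.mulVec_mulVec, ← Matrix.mulVec_mulVec]
    have e2 : (F *ᵥ u) ⬝ᵥ (Qb *ᵥ (G *ᵥ δ)) = u ⬝ᵥ (S *ᵥ δ) := by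
      rw [dp_mv, hSdef, ← Matrix.mulVec_mulVec, ← Matrix.mulVec_mulVec]
    have e3 : (G *ᵥ δ) ⬝ᵥ (Qb *ᵥ (F *ᵥ u)) = u ⬝ᵥ (S *ᵥ δ) := by
      have ht : (Gᵀ * Qb * F)ᵀ = S := by
        rw [Matrix.transpose_mul, Matrix.transpose_mul, Matrix.transpose_transpose, hQsym,
          hSdef, Matrix.mul_assoc]
      rw [dp_mv, Matrix.mulVec_mulVec, Matrix.mulVec_mulVec, dp_swap, ht]
    have e4 : (G *ᵥ δ) ⬝ᵥ (Qb *ᵥ (G *ᵥ δ)) = δ ⬝ᵥ ((Gᵀ * Qb * G) *ᵥ δ) := by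
      rw [dp_mv, ← Matrix.mulVec_mulVec, ← Matrix.mulVec_mulVec]
    have e5 : u ⬝ᵥ (P *ᵥ u) = u ⬝ᵥ (Rb *ᵥ u) + u ⬝ᵥ ((Fᵀ * Qb * F) *ᵥ u) := by
      rw [hPdef]
      show u ⬝ᵥ ((Rb + Fᵀ * Qb * F) *ᵥ u) = _
      rw [Matrix.add_mulVec, dotProduct_add]
    rw [e1, e2, e3, e4, e5]
    ring
  -- RHS expansion
  have hPK : P *ᵥ ((P⁻¹ * S) *ᵥ δ) = S *ᵥ δ := by
    rw [Matrix.mulVec_mulVec, Matrix.mul_nonsing_inv_cancel_left _ _ hP]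
  have hKt : (P⁻¹ * S)ᵀ = Sᵀ * P⁻¹ := by
    rw [Matrix.transpose_mul, Matrix.transpose_nonsing_inv, hPsym]
  have rhs_eq : (u + (P⁻¹ * S) *ᵥ δ) ⬝ᵥ (P *ᵥ (u + (P⁻¹ * S) *ᵥ δ)) + δ ⬝ᵥ (Cmat n m T A B Q R *ᵥ δ)
      = u ⬝ᵥ (P *ᵥ u) + 2 * (u ⬝ᵥ (S *ᵥ δ)) + δ ⬝ᵥ ((Gᵀ * Qb * G) *ᵥ δ) := by
    rw [Matrix.mulVec_add, dotProduct_add, add_dotProduct, add_dotProduct]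
    have r1 : u ⬝ᵥ (P *ᵥ ((P⁻¹ * S) *ᵥ δ)) = u ⬝ᵥ (S *ᵥ δ) := by rw [hPK]
    have r2 : ((P⁻¹ * S) *ᵥ δ) ⬝ᵥ (P *ᵥ u) = u ⬝ᵥ (S *ᵥ δ) := by
      rw [dp_mv, hKt, Matrix.mulVec_mulVec,
        Matrix.nonsing_inv_mul_cancel_right _ _ hP, dp_swap, Matrix.transpose_transpose]
    have r3 : ((P⁻¹ * S) *ᵥ δ) ⬝ᵥ (P *ᵥ ((P⁻¹ * S) *ᵥ δ)) = δ ⬝ᵥ ((Sᵀ * P⁻¹ * S) *ᵥ δ) := by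
      rw [hPK, dp_mv, hKt, Matrix.mulVec_mulVec]
    have r4 : δ ⬝ᵥ (Cmat n m T A B Q R *ᵥ δ)
        = δ ⬝ᵥ ((Gᵀ * Qb * G) *ᵥ δ) - δ ⬝ᵥ ((Sᵀ * P⁻¹ * S) *ᵥ δ) := by
      rw [Cmat_eq (A := A) (B := B) (Q := Q) (R := R) hQ hR]
      show δ ⬝ᵥ ((Gᵀ * Qb * G - Sᵀ * P⁻¹ * S) *ᵥ δ) = _
      rw [Matrix.sub_mulVec, dotProduct_sub]
    rw [r1, r2, r3, r4]
    ring
  rw [lhs_eq, rhs_eq]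

lemma cost_lower (hQ : Q.PosSemidef) (hR : R.PosDef) (u : UIdx m T → ℝ) (δ : SIdx n T → ℝ) :
    δ ⬝ᵥ (Cmat n m T A B Q R *ᵥ δ) ≤ costJ n m T A B Q R u δ := by
  rw [costJ_eq (A := A) (B := B) (Q := Q) (R := R) hQ hR u δ]
  apply le_add_of_nonneg_left
  have := (bigP_posDef (A := A) (B := B) (Q := Q) (R := R) (T := T) hQ hR).posSemidef.dotProduct_mulVec_nonneg
    (u + ((bigP n m T A B Q R)⁻¹ * ((bigF n m T A B)ᵀ * bigQ n T Q * bigG n T A)) *ᵥ δ)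
  rwa [star_pi] at this

lemma cost_opt (hQ : Q.PosSemidef) (hR : R.PosDef) (δ : SIdx n T → ℝ) :
    costJ n m T A B Q R
      (-(((bigP n m T A B Q R)⁻¹ * ((bigF n m T A B)ᵀ * bigQ n T Q * bigG n T A)) *ᵥ δ)) δ
      = δ ⬝ᵥ (Cmat n m T A B Q R *ᵥ δ) := by
  rw [costJ_eq (A := A) (B := B) (Q := Q) (R := R) hQ hR _ δ, neg_add_cancel,
    zero_dotProduct, zero_add]

end alg

lemma pad_dot (T : ℕ) (v : SIdx n T → ℝ) : padS n T v ⬝ᵥ padS n T v = v ⬝ᵥ v := by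
  classical
  rw [dotProduct, dotProduct, Fintype.sum_prod_type, Fintype.sum_prod_type,
    Fin.sum_univ_castSucc (n := T+1)]
  have hlast : ∑ j : Fin n, padS n T v (Fin.last (T+1), j) * padS n T v (Fin.last (T+1), j)
      = 0 := by
    apply Finset.sum_eq_zero
    intro j _
    simp [padS]
  rw [hlast, add_zero]
  apply Finset.sum_congr rfl
  intro s _
  apply Finset.sum_congr rfl
  intro j _
  simp [padS, Nat.le_of_lt_succ s.isLt]

lemma rayleigh_le {ι : Type*} [Fintype ι] [DecidableEq ι] [Nonempty ι]
    {C : Matrix ι ι ℝ} (hC : C.IsHermitian) (x : ι → ℝ) :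
    x ⬝ᵥ (C *ᵥ x) ≤ (⨆ i, hC.eigenvalues i) * (x ⬝ᵥ x) := by
  classical
  set U : Matrix ι ι ℝ := (hC.eigenvectorUnitary : Matrix ι ι ℝ)
  set y := Uᵀ *ᵥ x with hy
  have hUU : U * star U = 1 := (Matrix.mem_unitaryGroup_iff).mp hC.eigenvectorUnitary.2
  have hstar : star U = Uᵀ := realCT U
  have hxCx : x ⬝ᵥ (C *ᵥ x) = ∑ i, hC.eigenvalues i * (y i)^2 := by
    conv_lhs => rw [hC.spectral_theorem, Unitary.conjStarAlgAut_apply]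
    rw [← Matrix.mulVec_mulVec, ← Matrix.mulVec_mulVec, hstar, dp_swap]
    rw [dotProduct]
    apply Finset.sum_congr rfl
    intro i _
    rw [Matrix.mulVec_diagonal]
    show _ * y i = _
    simp [Function.comp]
    ring
  have hxx : x ⬝ᵥ x = ∑ i, (y i)^2 := by
    have : y ⬝ᵥ y = x ⬝ᵥ ((U * Uᵀ) *ᵥ x) := by
      rw [hy, dp_mv, Matrix.transpose_transpose, Matrix.mulVec_mulVec]
    rw [← hstar] at this
    rw [hUU, Matrix.one_mulVec] at this
    rw [← this, dotProduct]
    apply Finset.sum_congr rfl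
    intro i _
    ring
  rw [hxCx, hxx, Finset.mul_sum]
  apply Finset.sum_le_sum
  intro i _
  have h1 : hC.eigenvalues i ≤ ⨆ j, hC.eigenvalues j :=
    le_ciSup (Set.Finite.bddAbove (Set.finite_range _)) i
  have h2 : (0:ℝ) ≤ (y i)^2 := sq_nonneg _
  exact mul_le_mul_of_nonneg_right h1 h2

lemma eigen_quad {ι : Type*} [Fintype ι] [DecidableEq ι]
    {C : Matrix ι ι ℝ} (hC : C.IsHermitian) (i : ι) :
    hC.eigenvalues i
      = (⇑(hC.eigenvectorBasis i) : ι → ℝ) ⬝ᵥ (C *ᵥ ⇑(hC.eigenvectorBasis i)) := by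
  have := hC.eigenvalues_eq i
  simpa [star_pi] using this

lemma eigenvec_unit {ι : Type*} [Fintype ι] [DecidableEq ι]
    {C : Matrix ι ι ℝ} (hC : C.IsHermitian) (i : ι) :
    (⇑(hC.eigenvectorBasis i) : ι → ℝ) ⬝ᵥ ⇑(hC.eigenvectorBasis i) = 1 := by
  have hn : ‖hC.eigenvectorBasis i‖ = 1 := hC.eigenvectorBasis.orthonormal.1 i
  have : (inner ℝ (hC.eigenvectorBasis i) (hC.eigenvectorBasis i) : ℝ) = 1 := by
    rw [real_inner_self_eq_norm_sq, hn]; norm_num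
  rw [← this, PiLp.inner_apply, dotProduct]
  apply Finset.sum_congr rfl
  intro j _
  simp [mul_comm, sq]

/-- Corollary 1, first part: the maximum eigenvalue of `𝐂_T` is monotonically
non-decreasing in the planning horizon. -/
theorem stmt8 (n m T : ℕ) (hn : 0 < n) (hm : 0 < m) (hT : 1 ≤ T)
    (A : Matrix (Fin n) (Fin n) ℝ) (B : Matrix (Fin n) (Fin m) ℝ)
    (Q : Matrix (Fin n) (Fin n) ℝ) (R : Matrix (Fin m) (Fin m) ℝ)
    (hQ : Q.PosSemidef) (hR : R.PosDef)
    (hCT : (Cmat n m T A B Q R).IsHermitian)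
    (hCT1 : (Cmat n m (T + 1) A B Q R).IsHermitian) :
    (⨆ i : SIdx n T, hCT.eigenvalues i) ≤ ⨆ i : SIdx n (T + 1), hCT1.eigenvalues i := by
  haveI hnne : Nonempty (Fin n) := ⟨⟨0, hn⟩⟩
  apply ciSup_le
  intro i
  set v : SIdx n T → ℝ := ⇑(hCT.eigenvectorBasis i) with hv
  set δ' : SIdx n (T+1) → ℝ := padS n T v with hδ'
  set u₁ : UIdx m (T+1) → ℝ :=
    -(((bigP n m (T+1) A B Q R)⁻¹ *
        ((bigF n m (T+1) A B)ᵀ * bigQ n (T+1) Q * bigG n (T+1) A)) *ᵥ δ') with hu₁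
  have h1 : hCT.eigenvalues i = v ⬝ᵥ (Cmat n m T A B Q R *ᵥ v) := eigen_quad hCT i
  have h2 : v ⬝ᵥ (Cmat n m T A B Q R *ᵥ v) ≤ costJ n m T A B Q R (truncU m T u₁) v :=
    cost_lower (A := A) (B := B) (Q := Q) (R := R) hQ hR _ _
  have h3 : costJ n m T A B Q R (truncU m T u₁) v ≤ costJ n m (T+1) A B Q R u₁ δ' :=
    costJ_trunc_le (A := A) (B := B) (Q := Q) (R := R) hQ hR.posSemidef T u₁ v
  have h4 : costJ n m (T+1) A B Q R u₁ δ' = δ' ⬝ᵥ (Cmat n m (T+1) A B Q R *ᵥ δ') :=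
    cost_opt (A := A) (B := B) (Q := Q) (R := R) hQ hR δ'
  have h5 : δ' ⬝ᵥ (Cmat n m (T+1) A B Q R *ᵥ δ')
      ≤ (⨆ j : SIdx n (T+1), hCT1.eigenvalues j) * (δ' ⬝ᵥ δ') := rayleigh_le hCT1 δ'
  have h6 : δ' ⬝ᵥ δ' = 1 := by
    rw [hδ', pad_dot]
    exact eigenvec_unit hCT i
  rw [h6, mul_one] at h5
  calc hCT.eigenvalues i = v ⬝ᵥ (Cmat n m T A B Q R *ᵥ v) := h1
    _ ≤ costJ n m T A B Q R (truncU m T u₁) v := h2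
    _ ≤ costJ n m (T+1) A B Q R u₁ δ' := h3
    _ = δ' ⬝ᵥ (Cmat n m (T+1) A B Q R *ᵥ δ') := h4
    _ ≤ ⨆ j : SIdx n (T+1), hCT1.eigenvalues j := h5

end
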